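/- (Differential of the development map.) Let a ∈ u(n) be a fixed diagonal matrix and let g : ℝ² → U(n), (x,s) ↦ g(x,s), be a smooth map such that u := g⁻¹g_x takes values in u(n)_a^⊥, and such that for each s the maps x ↦ u(x,s) and x ↦ (g⁻¹g_s)(x,s) are of Schwartz class and (g⁻¹g_s)(x,s) → 0 as x → −∞. Then for each s, ∂_s u(·,s) = P_{u(·,s)}(π_a^⊥(g⁻¹g_s)(·,s)). -/

import Mathlib

open Matrix Filter MeasureTheory
open scoped Classical

attribute [local instance] Matrix.normedAddCommGroup Matrix.normedSpace

/-- A map of `ℝ` into a normed space is of Schwartz class if it is (the underlying function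
of) a Schwartz map. -/
def IsSchwartz {E : Type*} [NormedAddCommGroup E] [NormedSpace ℝ E] (f : ℝ → E) : Prop :=
  ∃ φ : SchwartzMap ℝ E, ⇑φ = f

variable {ι : Type*} [Fintype ι] [DecidableEq ι]

/-- The centralizer `u(n)_a = {y ∈ u(n) : [y,a] = 0}` of `a` in `u(n)`. -/
def uCent (a : Matrix ι ι ℂ) : Set (Matrix ι ι ℂ) :=
  {y | yᴴ = -y ∧ y * a = a * y}

/-- The orthogonal complement `u(n)_a^⊥` of `u(n)_a` in `u(n)` w.r.t. `⟨x,y⟩ = −tr(xy)`. -/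
def uPerp (a : Matrix ι ι ℂ) : Set (Matrix ι ι ℂ) :=
  {y | yᴴ = -y ∧ ∀ z ∈ uCent a, -(y * z).trace = 0}

/-- The orthogonal projection `π_a` of `u(n)` onto `u(n)_a` (for `a` diagonal): it keeps
exactly the entries `(i,j)` with `a i i = a j j`. -/
noncomputable def centProj (a y : Matrix ι ι ℂ) : Matrix ι ι ℂ :=
  Matrix.of fun i j => if a i i = a j j then y i j else 0

/-- The orthogonal projection `π_a^⊥` of `u(n)` onto `u(n)_a^⊥` (for `a` diagonal): it keeps
exactly the entries `(i,j)` with `a i i ≠ a j j`. -/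
noncomputable def perpProj (a y : Matrix ι ι ℂ) : Matrix ι ι ℂ :=
  Matrix.of fun i j => if a i i = a j j then 0 else y i j

/-- The integral operator `T_u(v)(x) = ∫_{−∞}^x π_a([u(y), v(y)]) dy`. -/
noncomputable def Tu (a : Matrix ι ι ℂ) (u v : ℝ → Matrix ι ι ℂ) (x : ℝ) : Matrix ι ι ℂ :=
  ∫ y in Set.Iic x, centProj a (u y * v y - v y * u y)

/-- The Poisson operator `P_u(v) = v_x + π_a^⊥([u,v]) − [u, T_u(v)]`. -/
noncomputable def Pu (a : Matrix ι ι ℂ) (u v : ℝ → Matrix ι ι ℂ) (x : ℝ) : Matrix ι ι ℂ :=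
  deriv v x + perpProj a (u x * v x - v x * u x)
    - (u x * Tu a u v x - Tu a u v x * u x)


set_option linter.unusedSectionVars false
set_option maxHeartbeats 1000000

section Helpers
variable {ι : Type*} [Fintype ι] [DecidableEq ι]

noncomputable def mulCLM : Matrix ι ι ℂ →L[ℝ] Matrix ι ι ℂ →L[ℝ] Matrix ι ι ℂ :=
  LinearMap.toContinuousLinearMap
    ((LinearMap.toContinuousLinearMap :
        (Matrix ι ι ℂ →ₗ[ℝ] Matrix ι ι ℂ) ≃ₗ[ℝ] (Matrix ι ι ℂ →L[ℝ] Matrix ι ι ℂ)).toLinearMap.comp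
      (LinearMap.mul ℝ (Matrix ι ι ℂ)))

@[simp] lemma mulCLM_apply (x y : Matrix ι ι ℂ) : mulCLM x y = x * y := rfl

noncomputable def starCLM : Matrix ι ι ℂ →L[ℝ] Matrix ι ι ℂ :=
  LinearMap.toContinuousLinearMap
    { toFun := fun m => star m
      map_add' := star_add
      map_smul' := fun r m => by simp [star_smul] }

@[simp] lemma starCLM_apply (x : Matrix ι ι ℂ) : starCLM x = star x := rfl

lemma HasDerivAt.matMul {f g : ℝ → Matrix ι ι ℂ} {f' g' : Matrix ι ι ℂ} {t : ℝ}
    (hf : HasDerivAt f f' t) (hg : HasDerivAt g g' t) :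
    HasDerivAt (fun t => f t * g t) (f' * g t + f t * g') t := by
  have h1 := ContinuousLinearMap.hasDerivAt_of_bilinear (𝕜 := ℝ) (E := Matrix ι ι ℂ)
    (F := Matrix ι ι ℂ) (G := Matrix ι ι ℂ) (B := mulCLM) (fun _ => hf) (fun _ => hg)
  rw [add_comm] at h1
  exact h1

lemma HasDerivAt.matStar {f : ℝ → Matrix ι ι ℂ} {f' : Matrix ι ι ℂ} {t : ℝ}
    (hf : HasDerivAt f f' t) :
    HasDerivAt (fun t => star (f t)) (star f') t := by
  have h1 : HasDerivAt (starCLM ∘ f) (starCLM f') t :=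
    starCLM.hasFDerivAt.comp_hasDerivAt t hf
  simpa [Function.comp_def] using h1

noncomputable def centCLM (a : Matrix ι ι ℂ) : Matrix ι ι ℂ →L[ℝ] Matrix ι ι ℂ :=
  LinearMap.toContinuousLinearMap
    { toFun := centProj a
      map_add' := fun x y => by ext i j; simp only [centProj, Matrix.of_apply, Matrix.add_apply]; split <;> simp
      map_smul' := fun r x => by ext i j; simp only [centProj, Matrix.of_apply, Matrix.smul_apply, RingHom.id_apply]; split <;> simp }

@[simp] lemma centCLM_apply (a x : Matrix ι ι ℂ) : centCLM a x = centProj a x := rfl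

noncomputable def perpCLM (a : Matrix ι ι ℂ) : Matrix ι ι ℂ →L[ℝ] Matrix ι ι ℂ :=
  LinearMap.toContinuousLinearMap
    { toFun := perpProj a
      map_add' := fun x y => by ext i j; simp only [perpProj, Matrix.of_apply, Matrix.add_apply]; split <;> simp
      map_smul' := fun r x => by ext i j; simp only [perpProj, Matrix.of_apply, Matrix.smul_apply, RingHom.id_apply]; split <;> simp }

@[simp] lemma perpCLM_apply (a x : Matrix ι ι ℂ) : perpCLM a x = perpProj a x := rfl

lemma centProj_add_perpProj (a x : Matrix ι ι ℂ) : centProj a x + perpProj a x = x := by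
  ext i j; simp only [centProj, perpProj, Matrix.of_apply, Matrix.add_apply]; split <;> simp

end Helpers
section Helpers2
variable {ι : Type*} [Fintype ι] [DecidableEq ι]

noncomputable def entryCLM (i j : ι) : Matrix ι ι ℂ →L[ℝ] ℂ :=
  LinearMap.toContinuousLinearMap
    { toFun := fun m => m i j
      map_add' := fun _ _ => rfl
      map_smul' := fun _ _ => rfl }

@[simp] lemma entryCLM_apply (i j : ι) (x : Matrix ι ι ℂ) : entryCLM i j x = x i j := rfl

lemma HasDerivAt.matEntry {f : ℝ → Matrix ι ι ℂ} {f' : Matrix ι ι ℂ} {t : ℝ}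
    (hf : HasDerivAt f f' t) (i j : ι) :
    HasDerivAt (fun t => f t i j) (f' i j) t := by
  have h1 : HasDerivAt (entryCLM i j ∘ f) (entryCLM i j f') t :=
    (entryCLM i j).hasFDerivAt.comp_hasDerivAt t hf
  simpa [Function.comp_def] using h1

lemma perpProj_add (a x y : Matrix ι ι ℂ) :
    perpProj a (x + y) = perpProj a x + perpProj a y := map_add (perpCLM a).toLinearMap x y

lemma centProj_add (a x y : Matrix ι ι ℂ) :
    centProj a (x + y) = centProj a x + centProj a y := map_add (centCLM a).toLinearMap x y

lemma perpProj_sub (a x y : Matrix ι ι ℂ) :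
    perpProj a (x - y) = perpProj a x - perpProj a y := map_sub (perpCLM a).toLinearMap x y

lemma centProj_sub (a x y : Matrix ι ι ℂ) :
    centProj a (x - y) = centProj a x - centProj a y := map_sub (centCLM a).toLinearMap x y

lemma perpProj_eq_self_of {a x : Matrix ι ι ℂ} (h : ∀ i j, a i i = a j j → x i j = 0) :
    perpProj a x = x := by
  ext i j
  simp only [perpProj, Matrix.of_apply]
  split
  · exact (h i j (by assumption)).symm
  · rfl

lemma centProj_eq_zero_of {a x : Matrix ι ι ℂ} (h : ∀ i j, a i i = a j j → x i j = 0) :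
    centProj a x = 0 := by
  ext i j
  simp only [centProj, Matrix.of_apply, Matrix.zero_apply]
  split
  · exact h i j (by assumption)
  · rfl

lemma centProj_support (a x : Matrix ι ι ℂ) :
    ∀ i j, ¬ a i i = a j j → centProj a x i j = 0 := by
  intro i j h; simp [centProj, h]

lemma perpProj_support (a x : Matrix ι ι ℂ) :
    ∀ i j, a i i = a j j → perpProj a x i j = 0 := by
  intro i j h; simp [perpProj, h]

/-- Commutator of a perp-supported matrix with a centrally supported matrix is
perp-supported. -/
lemma comm_block {a U W : Matrix ι ι ℂ}
    (hU : ∀ i j, a i i = a j j → U i j = 0)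
    (hW : ∀ i j, ¬ a i i = a j j → W i j = 0) :
    ∀ i j, a i i = a j j → (U * W - W * U) i j = 0 := by
  intro i j hij
  have h1 : (U * W) i j = 0 := by
    rw [Matrix.mul_apply]
    refine Finset.sum_eq_zero fun k _ => ?_
    by_cases h : a i i = a k k
    · rw [hU i k h, zero_mul]
    · rw [hW k j (fun hkj => h (by rw [hkj, hij])), mul_zero]
  have h2 : (W * U) i j = 0 := by
    rw [Matrix.mul_apply]
    refine Finset.sum_eq_zero fun k _ => ?_
    by_cases h : a k k = a j j
    · rw [hU k j h, mul_zero]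
    · rw [hW i k (fun hik => h (by rw [← hik, hij])), zero_mul]
  simp [Matrix.sub_apply, h1, h2]

lemma trace_mul_stdBasisMatrix (y : Matrix ι ι ℂ) (i j : ι) (c : ℂ) :
    (y * Matrix.single i j c).trace = y j i * c := by
  classical
  simp only [Matrix.trace, Matrix.diag, Matrix.mul_apply, Matrix.single,
    Matrix.of_apply, mul_ite, mul_zero, ite_and]
  rw [Finset.sum_comm]
  simp [Finset.sum_ite_eq]

lemma stdBasisMatrix_mem_uCent {a : Matrix ι ι ℂ} (ha : a.IsDiag) {i j : ι}
    (hij : a i i = a j j) (c d : ℂ) (hc : star c = -d) (hd : star d = -c) :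
    Matrix.single i j c + Matrix.single j i d ∈ uCent a := by
  have hct : ∀ (p q : ι) (d : ℂ), (Matrix.single p q d)ᴴ = Matrix.single q p (star d) := by
    intro p q d
    ext k l
    simp only [Matrix.conjTranspose_apply, Matrix.single, Matrix.of_apply]
    by_cases h1 : p = l <;> by_cases h2 : q = k <;> simp [h1, h2]
  constructor
  · rw [Matrix.conjTranspose_add, hct, hct, hc, hd]
    simp only [Matrix.single, Matrix.of_apply]
    ext k l
    simp only [Matrix.add_apply, Matrix.neg_apply, Matrix.of_apply]
    split <;> split <;> ring
  · have key : ∀ (z : Matrix ι ι ℂ), (∀ k l, z k l ≠ 0 → a k k = a l l) → z * a = a * z := by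
      intro z hz
      ext k l
      rw [Matrix.mul_apply, Matrix.mul_apply]
      rw [Finset.sum_eq_single l (fun m _ hm => by rw [ha (by exact hm), mul_zero])
        (fun h => absurd (Finset.mem_univ l) h),
        Finset.sum_eq_single k (fun m _ hm => by rw [ha (Ne.symm hm), zero_mul])
        (fun h => absurd (Finset.mem_univ k) h)]
      by_cases h : z k l = 0
      · simp [h]
      · rw [hz k l h]; ring
    apply key
    intro k l hkl
    simp only [Matrix.add_apply, Matrix.single, Matrix.of_apply] at hkl
    by_cases h1 : i = k ∧ j = l
    · rw [← h1.1, ← h1.2]; exact hij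
    · by_cases h2 : j = k ∧ i = l
      · rw [← h2.1, ← h2.2]; exact hij.symm
      · exfalso; apply hkl; simp [h1, h2]

lemma uPerp_entry {a : Matrix ι ι ℂ} (ha : a.IsDiag) {y : Matrix ι ι ℂ}
    (hy : y ∈ uPerp a) {i j : ι} (hij : a i i = a j j) : y i j = 0 := by
  have h1 := hy.2 _ (stdBasisMatrix_mem_uCent ha hij (1 : ℂ) (-1 : ℂ) (by simp) (by simp))
  have h2 := hy.2 _ (stdBasisMatrix_mem_uCent ha hij Complex.I Complex.I
    (by simp [Complex.ext_iff]) (by simp [Complex.ext_iff]))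
  rw [Matrix.mul_add, Matrix.trace_add, trace_mul_stdBasisMatrix, trace_mul_stdBasisMatrix]
    at h1 h2
  have e1 : y j i - y i j = 0 := by
    have := neg_eq_zero.mp h1; linear_combination this
  have e2 : y j i + y i j = 0 := by
    have h2' := neg_eq_zero.mp h2
    have : (y j i + y i j) * Complex.I = 0 := by linear_combination h2'
    rcases mul_eq_zero.mp this with h | h
    · exact h
    · exact absurd h Complex.I_ne_zero
  linear_combination (e2 - e1) / 2

lemma HasDerivAt.matDeriv {f : ℝ → Matrix ι ι ℂ} {f' : Matrix ι ι ℂ} {t : ℝ}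
    (hf : HasDerivAt f f' t) : _root_.deriv f t = f' := hf.deriv

end Helpers2
section Helpers3
variable {E : Type*} [NormedAddCommGroup E] [NormedSpace ℝ E]

/-- First partial derivative of a map on `ℝ²`. -/
noncomputable def pd1 (F : ℝ × ℝ → E) (p : ℝ × ℝ) : E := fderiv ℝ F p (1, 0)

/-- Second partial derivative of a map on `ℝ²`. -/
noncomputable def pd2 (F : ℝ × ℝ → E) (p : ℝ × ℝ) : E := fderiv ℝ F p (0, 1)

lemma hasDerivAt_pd1 {F : ℝ × ℝ → E} (hF : Differentiable ℝ F) (x s : ℝ) :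
    HasDerivAt (fun y => F (y, s)) (pd1 F (x, s)) x := by
  have hcv : HasDerivAt (fun y : ℝ => (y, s)) ((1 : ℝ), (0 : ℝ)) x :=
    (hasDerivAt_id x).prodMk (hasDerivAt_const x s)
  exact (hF (x, s)).hasFDerivAt.comp_hasDerivAt x hcv

lemma hasDerivAt_pd2 {F : ℝ × ℝ → E} (hF : Differentiable ℝ F) (x s : ℝ) :
    HasDerivAt (fun σ => F (x, σ)) (pd2 F (x, s)) s := by
  have hcv : HasDerivAt (fun σ : ℝ => (x, σ)) ((0 : ℝ), (1 : ℝ)) s :=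
    (hasDerivAt_const s x).prodMk (hasDerivAt_id s)
  exact (hF (x, s)).hasFDerivAt.comp_hasDerivAt s hcv

lemma contDiff_pd1 {F : ℝ × ℝ → E} (hF : ContDiff ℝ (⊤ : ℕ∞) F) :
    ContDiff ℝ (⊤ : ℕ∞) (pd1 F) :=
  (hF.fderiv_right (by simp)).clm_apply contDiff_const

lemma contDiff_pd2 {F : ℝ × ℝ → E} (hF : ContDiff ℝ (⊤ : ℕ∞) F) :
    ContDiff ℝ (⊤ : ℕ∞) (pd2 F) :=
  (hF.fderiv_right (by simp)).clm_apply contDiff_const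

lemma pd_symm {F : ℝ × ℝ → E} (hF : ContDiff ℝ (⊤ : ℕ∞) F) (p : ℝ × ℝ) :
    fderiv ℝ (pd1 F) p (0, 1) = fderiv ℝ (pd2 F) p (1, 0) := by
  have hfd : ContDiff ℝ (⊤ : ℕ∞) (fderiv ℝ F) := hF.fderiv_right (by simp)
  have hf' : ∀ q, HasFDerivAt F (fderiv ℝ F q) q := fun q =>
    ((hF.differentiable (by simp)) q).hasFDerivAt
  have hf'' : HasFDerivAt (fderiv ℝ F) (fderiv ℝ (fderiv ℝ F) p) p :=
    ((hfd.differentiable (by simp)) p).hasFDerivAt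
  have hsym := second_derivative_symmetric hf' hf'' ((0 : ℝ), (1 : ℝ)) ((1 : ℝ), (0 : ℝ))
  have e1 : fderiv ℝ (pd1 F) p =
      (ContinuousLinearMap.apply ℝ E ((1 : ℝ), (0 : ℝ))).comp (fderiv ℝ (fderiv ℝ F) p) :=
    ((ContinuousLinearMap.apply ℝ E ((1 : ℝ), (0 : ℝ))).hasFDerivAt.comp p hf'').fderiv
  have e2 : fderiv ℝ (pd2 F) p =
      (ContinuousLinearMap.apply ℝ E ((0 : ℝ), (1 : ℝ))).comp (fderiv ℝ (fderiv ℝ F) p) :=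
    ((ContinuousLinearMap.apply ℝ E ((0 : ℝ), (1 : ℝ))).hasFDerivAt.comp p hf'').fderiv
  rw [e1, e2]
  exact hsym

end Helpers3
/-- Differential of the development map: for `a ∈ u(n)` a fixed diagonal
matrix and `g : ℝ² → U(n)`, `(x,s) ↦ g(x,s)`, smooth with `u := g⁻¹g_x` valued in
`u(n)_a^⊥`, such that for each `s` the maps `x ↦ u(x,s)` and `x ↦ (g⁻¹g_s)(x,s)` are of
Schwartz class and `(g⁻¹g_s)(x,s) → 0` as `x → −∞`, one has, for each `s`,
`∂_s u(·,s) = P_{u(·,s)}(π_a^⊥(g⁻¹g_s)(·,s))`. -/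
theorem stmt18 (n : ℕ)
    (a : Matrix (Fin n) (Fin n) ℂ) (haDiag : a.IsDiag) (haSkew : aᴴ = -a)
    (g : ℝ → ℝ → Matrix (Fin n) (Fin n) ℂ)
    (hg : ContDiff ℝ (⊤ : ℕ∞) fun p : ℝ × ℝ => g p.1 p.2)
    (hgU : ∀ x s, g x s ∈ Matrix.unitaryGroup (Fin n) ℂ)
    -- u := g⁻¹ g_x takes values in u(n)_a^⊥
    (u : ℝ → ℝ → Matrix (Fin n) (Fin n) ℂ)
    (hu : ∀ x s, u x s = star (g x s) * deriv (fun y => g y s) x)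
    (huP : ∀ x s, u x s ∈ uPerp a)
    -- Schwartz-class assumptions in x, for each s
    (huS : ∀ s, IsSchwartz (fun x => u x s))
    (hgsS : ∀ s, IsSchwartz (fun x => star (g x s) * deriv (fun σ => g x σ) s))
    -- asymptotic condition as x → −∞, for each s
    (hgslim : ∀ s, Tendsto (fun x => star (g x s) * deriv (fun σ => g x σ) s) atBot (nhds 0)) :
    ∀ s x, deriv (fun σ => u x σ) s
        = Pu a (fun y => u y s)
            (fun y => perpProj a (star (g y s) * deriv (fun σ => g y σ) s)) x := by
  classical
  have hGd : Differentiable ℝ (fun p : ℝ × ℝ => g p.1 p.2) := hg.differentiable (by simp)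
  set D1 := pd1 (fun p : ℝ × ℝ => g p.1 p.2) with hD1def
  set D2 := pd2 (fun p : ℝ × ℝ => g p.1 p.2) with hD2def
  have hcurve1 : ∀ x s : ℝ, HasDerivAt (fun y => g y s) (D1 (x, s)) x := fun x s =>
    hasDerivAt_pd1 hGd x s
  have hcurve2 : ∀ x s : ℝ, HasDerivAt (fun σ => g x σ) (D2 (x, s)) s := fun x s =>
    hasDerivAt_pd2 hGd x s
  have hD1d : Differentiable ℝ D1 := (contDiff_pd1 hg).differentiable (by simp)
  have hD2d : Differentiable ℝ D2 := (contDiff_pd2 hg).differentiable (by simp)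
  have hsymm : ∀ p : ℝ × ℝ, fderiv ℝ D1 p (0, 1) = fderiv ℝ D2 p (1, 0) := pd_symm hg
  have hD1curve : ∀ x s : ℝ, HasDerivAt (fun σ => D1 (x, σ)) (fderiv ℝ D1 (x, s) (0, 1)) s :=
    fun x s => hasDerivAt_pd2 hD1d x s
  have hD2curve : ∀ x s : ℝ, HasDerivAt (fun y => D2 (y, s)) (fderiv ℝ D2 (x, s) (1, 0)) x :=
    fun x s => hasDerivAt_pd1 hD2d x s
  -- unitarity
  have hstar1 : ∀ x s : ℝ, star (g x s) * g x s = 1 := fun x s =>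
    (Unitary.mem_iff.mp (hgU x s)).1
  have hstar2 : ∀ x s : ℝ, g x s * star (g x s) = 1 := fun x s =>
    (Unitary.mem_iff.mp (hgU x s)).2
  -- star of partial derivatives
  have hsD1 : ∀ x s : ℝ, star (D1 (x, s)) = -(star (g x s) * D1 (x, s) * star (g x s)) := by
    intro x s
    have h1 : HasDerivAt (fun y => star (g y s) * g y s)
        (star (D1 (x, s)) * g x s + star (g x s) * D1 (x, s)) x :=
      ((hcurve1 x s).matStar).matMul (hcurve1 x s)
    have h2 : (fun y : ℝ => star (g y s) * g y s) = fun _ => (1 : Matrix (Fin n) (Fin n) ℂ) :=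
      funext fun y => hstar1 y s
    rw [h2] at h1
    have h0 : star (D1 (x, s)) * g x s + star (g x s) * D1 (x, s) = 0 :=
      ((hasDerivAt_const x (1 : Matrix (Fin n) (Fin n) ℂ)).unique h1).symm
    have h3 : star (D1 (x, s)) * g x s = -(star (g x s) * D1 (x, s)) :=
      eq_neg_of_add_eq_zero_left h0
    calc star (D1 (x, s)) = star (D1 (x, s)) * (g x s * star (g x s)) := by
          rw [hstar2, mul_one]
      _ = star (D1 (x, s)) * g x s * star (g x s) := by rw [mul_assoc]
      _ = -(star (g x s) * D1 (x, s) * star (g x s)) := by rw [h3]; simp [neg_mul]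
  have hsD2 : ∀ x s : ℝ, star (D2 (x, s)) = -(star (g x s) * D2 (x, s) * star (g x s)) := by
    intro x s
    have h1 : HasDerivAt (fun σ => star (g x σ) * g x σ)
        (star (D2 (x, s)) * g x s + star (g x s) * D2 (x, s)) s :=
      ((hcurve2 x s).matStar).matMul (hcurve2 x s)
    have h2 : (fun σ : ℝ => star (g x σ) * g x σ) = fun _ => (1 : Matrix (Fin n) (Fin n) ℂ) :=
      funext fun σ => hstar1 x σ
    rw [h2] at h1
    have h0 : star (D2 (x, s)) * g x s + star (g x s) * D2 (x, s) = 0 :=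
      ((hasDerivAt_const s (1 : Matrix (Fin n) (Fin n) ℂ)).unique h1).symm
    have h3 : star (D2 (x, s)) * g x s = -(star (g x s) * D2 (x, s)) :=
      eq_neg_of_add_eq_zero_left h0
    calc star (D2 (x, s)) = star (D2 (x, s)) * (g x s * star (g x s)) := by
          rw [hstar2, mul_one]
      _ = star (D2 (x, s)) * g x s * star (g x s) := by rw [mul_assoc]
      _ = -(star (g x s) * D2 (x, s) * star (g x s)) := by rw [h3]; simp [neg_mul]
  have hu' : ∀ x s : ℝ, u x s = star (g x s) * D1 (x, s) := by
    intro x s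
    rw [hu, (hcurve1 x s).matDeriv]
  intro s x
  -- objects for fixed s
  set V : ℝ → Matrix (Fin n) (Fin n) ℂ := fun y => star (g y s) * D2 (y, s) with hVdef
  have hVeq : (fun y => star (g y s) * deriv (fun σ => g y σ) s) = V :=
    funext fun y => by rw [(hcurve2 y s).matDeriv]
  set W : ℝ → Matrix (Fin n) (Fin n) ℂ := fun y => fderiv ℝ D2 (y, s) (1, 0) with hWdef
  have hVder : ∀ y, HasDerivAt V (star (D1 (y, s)) * D2 (y, s) + star (g y s) * W y) y :=
    fun y => ((hcurve1 y s).matStar).matMul (hD2curve y s)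
  -- derivative of u in s
  have hUs : ∀ y, HasDerivAt (fun σ => u y σ)
      (star (D2 (y, s)) * D1 (y, s) + star (g y s) * W y) s := by
    intro y
    have h := ((hcurve2 y s).matStar).matMul (hD1curve y s)
    rw [hsymm (y, s)] at h
    have heq : (fun σ => star (g y σ) * D1 (y, σ)) = fun σ => u y σ :=
      funext fun σ => (hu' y σ).symm
    rw [heq] at h
    exact h
  -- the key zero-curvature identity
  have hkey : ∀ y, deriv (fun σ => u y σ) s
      = deriv V y + (u y s * V y - V y * u y s) := by
    intro y
    rw [(hUs y).matDeriv, (hVder y).matDeriv, hsD1, hsD2, hu' y s]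
    simp only [hVdef]
    noncomm_ring
  -- entries of u and of its s-derivative vanish on the centre block
  have hcentU : ∀ y σ (i j : Fin n), a i i = a j j → u y σ i j = 0 :=
    fun y σ i j hij => uPerp_entry haDiag (huP y σ) hij
  have husCent : ∀ y (i j : Fin n), a i i = a j j → deriv (fun σ => u y σ) s i j = 0 := by
    intro y i j hij
    have hE : HasDerivAt (fun σ => u y σ i j)
        ((star (D2 (y, s)) * D1 (y, s) + star (g y s) * W y) i j) s := (hUs y).matEntry i j
    have hzero : (fun σ => u y σ i j) = fun _ => (0 : ℂ) := funext fun σ => hcentU y σ i j hij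
    rw [hzero] at hE
    have h0 := (hasDerivAt_const s (0 : ℂ)).unique hE
    rw [(hUs y).matDeriv]
    exact h0.symm
  -- Schwartz data and limits for V
  obtain ⟨φ, hφ⟩ := hgsS s
  have hφV : ⇑φ = V := hφ.trans hVeq
  have hVlim : Tendsto V atBot (nhds 0) := by rw [← hVeq]; exact hgslim s
  -- derivative facts for the projections of V
  have hV0der : ∀ y, HasDerivAt (fun z => centProj a (V z)) (centProj a (deriv V y)) y := by
    intro y
    have h : HasDerivAt (⇑(centCLM a) ∘ V)
        (centCLM a (star (D1 (y, s)) * D2 (y, s) + star (g y s) * W y)) y :=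
      (centCLM a).hasFDerivAt.comp_hasDerivAt y (hVder y)
    rw [(hVder y).matDeriv]
    simpa [Function.comp_def] using h
  have hVpder : ∀ y, HasDerivAt (fun z => perpProj a (V z)) (perpProj a (deriv V y)) y := by
    intro y
    have h : HasDerivAt (⇑(perpCLM a) ∘ V)
        (perpCLM a (star (D1 (y, s)) * D2 (y, s) + star (g y s) * W y)) y :=
      (perpCLM a).hasFDerivAt.comp_hasDerivAt y (hVder y)
    rw [(hVder y).matDeriv]
    simpa [Function.comp_def] using h
  -- the integrand of Tu is minus the derivative of the central part of V
  have hintegrand : ∀ y, centProj a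
      (u y s * perpProj a (V y) - perpProj a (V y) * u y s)
      = -centProj a (deriv V y) := by
    intro y
    obtain ⟨c, hc⟩ : ∃ c, c = centProj a (V y) := ⟨_, rfl⟩
    obtain ⟨p, hp⟩ : ∃ p, p = perpProj a (V y) := ⟨_, rfl⟩
    have hcp : c + p = V y := by rw [hc, hp]; exact centProj_add_perpProj a (V y)
    have h2 : centProj a (deriv (fun σ => u y σ) s) = 0 :=
      centProj_eq_zero_of (fun i j hij => husCent y i j hij)
    have h3 : centProj a (u y s * c - c * u y s) = 0 := by
      rw [hc]
      exact centProj_eq_zero_of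
        (comm_block (fun i j hij => hcentU y s i j hij) (centProj_support a (V y)))
    have h1 : u y s * V y - V y * u y s = deriv (fun σ => u y σ) s - deriv V y := by
      rw [hkey y]; abel
    have hsplit : u y s * p - p * u y s
        = (u y s * V y - V y * u y s) - (u y s * c - c * u y s) := by
      rw [← hcp]; noncomm_ring
    rw [← hp, hsplit, centProj_sub, h3, sub_zero, h1, centProj_sub, h2, zero_sub]
  -- limit of the central part of V
  have hV0lim : Tendsto (fun y => centProj a (V y)) atBot (nhds 0) := by
    have h := ((centCLM a).continuous.tendsto 0).comp hVlim
    have h0 : centProj a (0 : Matrix (Fin n) (Fin n) ℂ) = 0 :=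
      centProj_eq_zero_of (fun i j _ => rfl)
    simpa [Function.comp_def, h0] using h
  -- integrability of the derivative of the central part of V
  have hderint := by
    have h1 : (fun y => deriv V y) = ⇑(SchwartzMap.derivCLM ℝ _ φ) :=
      funext fun y => by rw [SchwartzMap.derivCLM_apply, hφV]; rfl
    have h2 := (SchwartzMap.derivCLM ℝ _ φ).integrable (μ := volume)
    rw [← h1] at h2
    exact ((centCLM a).integrable_comp h2).integrableOn (s := Set.Iic x)
  -- computation of Tu
  have hTu : Tu a (fun y => u y s) (fun y => perpProj a (V y)) x = -centProj a (V x) := by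
    have hint : ∫ y in Set.Iic x, centProj a (deriv V y) = centProj a (V x) - 0 :=
      integral_Iic_of_hasDerivAt_of_tendsto' (fun y _ => hV0der y) hderint hV0lim
    calc Tu a (fun y => u y s) (fun y => perpProj a (V y)) x
        = ∫ y in Set.Iic x, centProj a
            (u y s * perpProj a (V y) - perpProj a (V y) * u y s) := rfl
      _ = ∫ y in Set.Iic x, -centProj a (deriv V y) := by simp only [hintegrand]
      _ = -∫ y in Set.Iic x, centProj a (deriv V y) := by rw [integral_neg]
      _ = -centProj a (V x) := by rw [hint, sub_zero]
  -- rewrite the goal in terms of V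
  have hgoalV : (fun y => perpProj a (star (g y s) * deriv (fun σ => g y σ) s))
      = fun y => perpProj a (V y) := funext fun y => by rw [congrFun hVeq y]
  rw [hgoalV]
  show deriv (fun σ => u x σ) s
      = deriv (fun z => perpProj a (V z)) x
        + perpProj a (u x s * perpProj a (V x) - perpProj a (V x) * u x s)
        - (u x s * Tu a (fun y => u y s) (fun y => perpProj a (V y)) x
            - Tu a (fun y => u y s) (fun y => perpProj a (V y)) x * u x s)
  rw [hTu, (hVpder x).matDeriv]
  have e4 : u x s * -centProj a (V x) - -centProj a (V x) * u x s
      = -(u x s * centProj a (V x) - centProj a (V x) * u x s) := by noncomm_ring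
  rw [e4]
  have e2 : u x s * centProj a (V x) - centProj a (V x) * u x s
      = perpProj a (u x s * centProj a (V x) - centProj a (V x) * u x s) :=
    (perpProj_eq_self_of
      (comm_block (fun i j hij => hcentU x s i j hij) (centProj_support a (V x)))).symm
  rw [e2, sub_neg_eq_add, ← perpProj_add, ← perpProj_add]
  have e3 : deriv (fun σ => u x σ) s = perpProj a (deriv (fun σ => u x σ) s) :=
    (perpProj_eq_self_of (husCent x)).symm
  rw [e3]
  congr 1
  rw [hkey x]
  obtain ⟨c, hc⟩ : ∃ c, c = centProj a (V x) := ⟨_, rfl⟩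
  obtain ⟨p, hp⟩ : ∃ p, p = perpProj a (V x) := ⟨_, rfl⟩
  have hcp : c + p = V x := by rw [hc, hp]; exact centProj_add_perpProj a (V x)
  rw [← hc, ← hp, ← hcp]
  noncomm_ring
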